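/- Let φ_k : ℝ² → A_{2k} be defined by φ_k(p,q) = (q^k cos(2πp/q), q^k sin(2πp/q), q) for q ≠ 0 and φ_k(p,0) = (0,0,0). Then φ_k(p,q) = φ_k(p',q') if and only if (p,q) ∼ (p',q'), where ∼ is the closed equivalence relation generated by the ℤ-action n·(p,q) = (p+nq,q); moreover φ_k is surjective onto A_{2k} = {(x,y,z) : x²+y² = z^{2k}}. -/

import Mathlib

open Real

/-- The map `φ_k(p,q) = (q^k cos(2πp/q), q^k sin(2πp/q), q)` (sending the line
`q = 0` to the origin; note `p/0 = 0` in Lean, so the formula already extends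
by `(0,0,0)`). -/
noncomputable def phiMap (k : ℕ) (v : ℝ × ℝ) : ℝ × ℝ × ℝ :=
  (v.2 ^ k * Real.cos (2 * π * v.1 / v.2),
   v.2 ^ k * Real.sin (2 * π * v.1 / v.2), v.2)

/-- The closed equivalence relation generated by the `ℤ`-action
`n·(p,q) = (p+nq,q)`: either both points lie on `q = 0`, or they have the same
`q ≠ 0` and differ by an integer multiple of `q` in `p`. -/
def simRel (a b : ℝ × ℝ) : Prop :=
  (a.2 = 0 ∧ b.2 = 0) ∨ (a.2 = b.2 ∧ a.2 ≠ 0 ∧ ∃ n : ℤ, b.1 = a.1 + n * a.2)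

/-- `φ_k` identifies exactly the `∼`-equivalence classes and is surjective onto
`A_{2k} = {x² + y² = z^{2k}}`. -/
theorem stmt10 (k : ℕ) (hk : 2 ≤ k) :
    (∀ a b : ℝ × ℝ, phiMap k a = phiMap k b ↔ simRel a b) ∧
    (∀ w : ℝ × ℝ × ℝ, w.1 ^ 2 + w.2.1 ^ 2 = w.2.2 ^ (2 * k) →
      ∃ a : ℝ × ℝ, phiMap k a = w) := by
  constructor
  · intro a b
    constructor
    · intro h
      obtain ⟨p, q⟩ := a
      obtain ⟨p', q'⟩ := b
      simp only [phiMap, Prod.mk.injEq] at h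
      obtain ⟨h1, h2, h3⟩ := h
      subst h3
      by_cases hq : q = 0
      · exact Or.inl ⟨hq, hq⟩
      · refine Or.inr ⟨rfl, hq, ?_⟩
        have hqk : (q : ℝ) ^ k ≠ 0 := pow_ne_zero _ hq
        have hc : Real.cos (2 * π * p / q) = Real.cos (2 * π * p' / q) :=
          mul_left_cancel₀ hqk h1
        have hs : Real.sin (2 * π * p / q) = Real.sin (2 * π * p' / q) :=
          mul_left_cancel₀ hqk h2
        have := Real.Angle.cos_sin_inj hc hs
        rw [Real.Angle.angle_eq_iff_two_pi_dvd_sub] at this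
        obtain ⟨n, hn⟩ := this
        refine ⟨-n, ?_⟩
        have hπ : (2 * π) ≠ 0 := by positivity
        have : 2 * π * p / q - 2 * π * p' / q = 2 * π * n := hn
        field_simp at this
        have h4 : (2*π)*(p' - (p + (-n) * q)) = 0 := by push_cast; linear_combination (-(2*π)) * this
        have h5 := mul_eq_zero.mp h4
        rcases h5 with h5 | h5
        · exact absurd h5 hπ
        · show p' = p + ((-n : ℤ) : ℝ) * q
          push_cast
          linarith
    · rintro (⟨h1, h2⟩ | ⟨h1, h2, n, h3⟩)
      · obtain ⟨p, q⟩ := a; obtain ⟨p', q'⟩ := b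
        simp only at h1 h2
        subst h1; subst h2
        have hk0 : k ≠ 0 := by omega
        simp [phiMap, zero_pow hk0]
      · obtain ⟨p, q⟩ := a; obtain ⟨p', q'⟩ := b
        simp only at h1 h2 h3
        subst h1; subst h3
        have harg : 2 * π * (p + n * q) / q = 2 * π * p / q + n * (2 * π) := by
          field_simp
        simp only [phiMap, Prod.mk.injEq, harg,
          Real.cos_add_int_mul_two_pi, Real.sin_add_int_mul_two_pi]
  · rintro ⟨x, y, z⟩ h
    simp only at h
    by_cases hz : z = 0
    · subst hz
      have h2k : 2 * k ≠ 0 := by omega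
      rw [zero_pow h2k] at h
      have hx : x = 0 := by nlinarith
      have hy : y = 0 := by nlinarith
      refine ⟨(0, 0), ?_⟩
      have hk0 : k ≠ 0 := by omega
      simp [phiMap, zero_pow hk0, hx, hy]
    · have hzk : (z : ℝ) ^ k ≠ 0 := pow_ne_zero _ hz
      set c : ℂ := ⟨x / z ^ k, y / z ^ k⟩ with hc
      have habs : ‖c‖ = 1 := by
        rw [Complex.norm_def, Complex.normSq_mk]
        rw [show x / z ^ k * (x / z ^ k) + y / z ^ k * (y / z ^ k)
            = (x ^ 2 + y ^ 2) / (z ^ k) ^ 2 by field_simp]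
        rw [h, ← pow_mul, mul_comm k 2,
          div_self (pow_ne_zero _ hz), Real.sqrt_one]
      have hc0 : c ≠ 0 := by
        intro h0
        rw [h0] at habs
        simp at habs
      refine ⟨(Complex.arg c * z / (2 * π), z), ?_⟩
      have hπ : (2 * π) ≠ 0 := by positivity
      have harg : 2 * π * (Complex.arg c * z / (2 * π)) / z = Complex.arg c := by
        field_simp
        try ring
      simp only [phiMap, harg]
      refine Prod.ext ?_ (Prod.ext ?_ rfl) <;> simp only
      · rw [Complex.cos_arg hc0, habs]
        simp only [hc]
        field_simp
      · rw [Complex.sin_arg, habs]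
        simp only [hc]
        field_simp
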